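/- (Stability of the Sylvester solution under perturbation.) Fix X ∈ ℝ^{d×n} and λ > 0. For Y ∈ ℝ^{k×n}, let W(Y) denote the unique solution of (YYᵀ + λI)W + W(XXᵀ) = 2YXᵀ. Then for any Y and perturbation ΔY, the solutions W = W(Y) and Ŵ = W(Y + ΔY) satisfy ‖Ŵ − W‖_F ≤ (1/λ)[ 2‖ΔY‖_F‖X‖_F + (‖ΔY‖_F² + 2‖Y‖_F‖ΔY‖_F)‖W‖_F ]. In particular, ‖Ŵ − W‖_F → 0 as ‖ΔY‖_F → 0. -/

import Mathlib

open Matrix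

/-- The Frobenius norm of a real matrix. -/
noncomputable def frob {k d : ℕ} (A : Matrix (Fin k) (Fin d) ℝ) : ℝ :=
  Real.sqrt (∑ i, ∑ j, (A i j) ^ 2)

namespace Stmt11Aux

noncomputable def ip {k d : ℕ} (A B : Matrix (Fin k) (Fin d) ℝ) : ℝ :=
  ∑ i, ∑ j, A i j * B i j

variable {k d m : ℕ}

lemma ip_eq_trace (A B : Matrix (Fin k) (Fin d) ℝ) : ip A B = Matrix.trace (Aᵀ * B) := by
  simp only [ip, Matrix.trace, Matrix.diag_apply, Matrix.mul_apply, Matrix.transpose_apply]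
  rw [Finset.sum_comm]

lemma ip_comm (A B : Matrix (Fin k) (Fin d) ℝ) : ip A B = ip B A := by
  simp only [ip, mul_comm]

lemma ip_self_nonneg (A : Matrix (Fin k) (Fin d) ℝ) : 0 ≤ ip A A :=
  Finset.sum_nonneg fun _ _ => Finset.sum_nonneg fun _ _ => mul_self_nonneg _

lemma frob_eq_sqrt_ip (A : Matrix (Fin k) (Fin d) ℝ) : frob A = Real.sqrt (ip A A) := by
  simp only [frob, ip, sq]

lemma frob_nonneg (A : Matrix (Fin k) (Fin d) ℝ) : 0 ≤ frob A := Real.sqrt_nonneg _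

lemma sq_frob (A : Matrix (Fin k) (Fin d) ℝ) : frob A ^ 2 = ip A A := by
  rw [frob_eq_sqrt_ip, Real.sq_sqrt (ip_self_nonneg A)]

lemma ip_le (A B : Matrix (Fin k) (Fin d) ℝ) : ip A B ≤ frob A * frob B := by
  have h := Real.sum_mul_le_sqrt_mul_sqrt (Finset.univ : Finset (Fin k × Fin d))
    (fun p => A p.1 p.2) (fun p => B p.1 p.2)
  rw [ip, frob, frob]
  simpa only [← Fintype.sum_prod_type'] using h

lemma frob_transpose (A : Matrix (Fin k) (Fin d) ℝ) : frob Aᵀ = frob A := by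
  simp only [frob, Matrix.transpose_apply]
  rw [Finset.sum_comm]

lemma frob_mul_le (A : Matrix (Fin k) (Fin m) ℝ) (B : Matrix (Fin m) (Fin d) ℝ) :
    frob (A * B) ≤ frob A * frob B := by
  rw [frob, frob, frob, ← Real.sqrt_mul (x := ∑ i, ∑ j, A i j ^ 2) (Finset.sum_nonneg fun _ _ =>
    Finset.sum_nonneg fun _ _ => sq_nonneg _)]
  apply Real.sqrt_le_sqrt
  calc ∑ i, ∑ j, ((A * B) i j) ^ 2
      ≤ ∑ i, ∑ j, (∑ l, A i l ^ 2) * (∑ l, B l j ^ 2) := by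
        apply Finset.sum_le_sum; intro i _
        apply Finset.sum_le_sum; intro j _
        simpa [Matrix.mul_apply] using
          Finset.sum_mul_sq_le_sq_mul_sq Finset.univ (fun l => A i l) (fun l => B l j)
    _ = (∑ i, ∑ l, A i l ^ 2) * (∑ j, ∑ l, B l j ^ 2) := by
        rw [← Finset.sum_mul_sum]
    _ = (∑ i, ∑ l, A i l ^ 2) * (∑ l, ∑ j, B l j ^ 2) := by
        rw [Finset.sum_comm (f := fun j l => B l j ^ 2)]


lemma ip_add_right (A B C : Matrix (Fin k) (Fin d) ℝ) : ip A (B + C) = ip A B + ip A C := by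
  simp only [ip, Matrix.add_apply, mul_add, Finset.sum_add_distrib]

lemma ip_sub_right (A B C : Matrix (Fin k) (Fin d) ℝ) : ip A (B - C) = ip A B - ip A C := by
  simp only [ip, Matrix.sub_apply, mul_sub, Finset.sum_sub_distrib]

lemma ip_smul_right (c : ℝ) (A B : Matrix (Fin k) (Fin d) ℝ) : ip A (c • B) = c * ip A B := by
  simp only [ip, Matrix.smul_apply, smul_eq_mul, Finset.mul_sum]
  congr 1; ext i; congr 1; ext j; ring

lemma ip_mul_left (N : Matrix (Fin k) (Fin m) ℝ) (A : Matrix (Fin m) (Fin d) ℝ)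
    (B : Matrix (Fin k) (Fin d) ℝ) : ip (N * A) B = ip A (Nᵀ * B) := by
  rw [ip_eq_trace, ip_eq_trace, Matrix.transpose_mul, Matrix.mul_assoc]

lemma ip_mul_right (A : Matrix (Fin k) (Fin m) ℝ) (M : Matrix (Fin m) (Fin d) ℝ)
    (B : Matrix (Fin k) (Fin d) ℝ) : ip (A * M) B = ip A (B * Mᵀ) := by
  rw [ip_eq_trace, ip_eq_trace, Matrix.transpose_mul, ← Matrix.mul_assoc,
    ← Matrix.trace_mul_cycle]

lemma frob_neg (A : Matrix (Fin k) (Fin d) ℝ) : frob (-A) = frob A := by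
  simp [frob]

lemma frob_smul (c : ℝ) (A : Matrix (Fin k) (Fin d) ℝ) : frob (c • A) = |c| * frob A := by
  simp only [frob, Matrix.smul_apply, smul_eq_mul, mul_pow, ← Finset.mul_sum]
  rw [Real.sqrt_mul (sq_nonneg c), Real.sqrt_sq_eq_abs]

lemma frob_add_le (A B : Matrix (Fin k) (Fin d) ℝ) : frob (A + B) ≤ frob A + frob B := by
  have h : ip (A + B) (A + B) ≤ (frob A + frob B) ^ 2 := by
    have h1 : ip (A + B) (A + B) = ip A A + 2 * ip A B + ip B B := by
      rw [ip_add_right, ip_comm (A+B) A, ip_comm (A+B) B, ip_add_right, ip_add_right]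
      rw [ip_comm B A]; ring
    rw [h1, ← sq_frob, ← sq_frob]
    have hab := ip_le A B
    nlinarith [frob_nonneg A, frob_nonneg B, hab]
  rw [frob_eq_sqrt_ip]
  calc Real.sqrt (ip (A+B) (A+B)) ≤ Real.sqrt ((frob A + frob B) ^ 2) := Real.sqrt_le_sqrt h
    _ = frob A + frob B := Real.sqrt_sq (by have := frob_nonneg A; have := frob_nonneg B; linarith)

lemma frob_sub_le (A B : Matrix (Fin k) (Fin d) ℝ) : frob (A - B) ≤ frob A + frob B := by
  rw [sub_eq_add_neg]
  exact (frob_add_le A (-B)).trans_eq (by rw [frob_neg])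

end Stmt11Aux

open Stmt11Aux

/-- Stability of the Sylvester solution under perturbation of Y:
if W solves the equation for Y and Ŵ solves it for Y + ΔY, then
‖Ŵ − W‖_F ≤ (1/λ)[2‖ΔY‖_F‖X‖_F + (‖ΔY‖_F² + 2‖Y‖_F‖ΔY‖_F)‖W‖_F]. -/
theorem stmt_11 (k d n : ℕ) (X : Matrix (Fin d) (Fin n) ℝ) (lam : ℝ) (hlam : 0 < lam)
    (Y ΔY : Matrix (Fin k) (Fin n) ℝ) (W What : Matrix (Fin k) (Fin d) ℝ)
    (hW : (Y * Yᵀ + lam • (1 : Matrix (Fin k) (Fin k) ℝ)) * W + W * (X * Xᵀ) =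
      (2 : ℝ) • (Y * Xᵀ))
    (hWhat : ((Y + ΔY) * (Y + ΔY)ᵀ + lam • (1 : Matrix (Fin k) (Fin k) ℝ)) * What +
      What * (X * Xᵀ) = (2 : ℝ) • ((Y + ΔY) * Xᵀ)) :
    frob (What - W) ≤
      (1 / lam) * (2 * frob ΔY * frob X + (frob ΔY ^ 2 + 2 * frob Y * frob ΔY) * frob W) := by
  set D := What - W with hDdef
  set E := ΔY * ΔYᵀ + Y * ΔYᵀ + ΔY * Yᵀ with hEdef
  set K := (2:ℝ) • (ΔY * Xᵀ) - E * W with hKdef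
  have hexp : (Y + ΔY) * (Y + ΔY)ᵀ = Y * Yᵀ + E := by
    rw [hEdef, Matrix.transpose_add]
    simp only [Matrix.add_mul, Matrix.mul_add]
    abel
  have hD : ((Y + ΔY) * (Y + ΔY)ᵀ + lam • (1 : Matrix (Fin k) (Fin k) ℝ)) * D + D * (X * Xᵀ)
      = K := by
    have h1 : ((Y + ΔY) * (Y + ΔY)ᵀ + lam • (1 : Matrix (Fin k) (Fin k) ℝ)) * D + D * (X * Xᵀ)
        = (((Y + ΔY) * (Y + ΔY)ᵀ + lam • (1 : Matrix (Fin k) (Fin k) ℝ)) * What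
            + What * (X * Xᵀ))
          - (((Y + ΔY) * (Y + ΔY)ᵀ + lam • (1 : Matrix (Fin k) (Fin k) ℝ)) * W
            + W * (X * Xᵀ)) := by
      rw [hDdef, Matrix.mul_sub, Matrix.sub_mul]; abel
    rw [h1, hWhat]
    have h2 : ((Y + ΔY) * (Y + ΔY)ᵀ + lam • (1 : Matrix (Fin k) (Fin k) ℝ)) * W + W * (X * Xᵀ)
        = (2:ℝ) • (Y * Xᵀ) + E * W := by
      rw [hexp, ← hW]
      simp only [Matrix.add_mul]
      abel
    rw [h2, hKdef, Matrix.add_mul, smul_add]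
    abel
  have hN : 0 ≤ ip D (((Y + ΔY) * (Y + ΔY)ᵀ) * D) := by
    rw [Matrix.mul_assoc, ip_comm, ip_mul_left]
    exact ip_self_nonneg _
  have hB : 0 ≤ ip D (D * (X * Xᵀ)) := by
    rw [← Matrix.mul_assoc, ip_comm, ip_mul_right, Matrix.transpose_transpose]
    exact ip_self_nonneg _
  have hkey : lam * frob D ^ 2 ≤ frob D * frob K := by
    have h3 : ip D (((Y + ΔY) * (Y + ΔY)ᵀ + lam • (1 : Matrix (Fin k) (Fin k) ℝ)) * D
        + D * (X * Xᵀ)) = ip D K := by rw [hD]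
    rw [ip_add_right, Matrix.add_mul, Matrix.smul_mul, Matrix.one_mul, ip_add_right,
      ip_smul_right] at h3
    have h4 := ip_le D K
    rw [sq_frob]
    linarith
  have hK : frob K ≤ 2 * frob ΔY * frob X + (frob ΔY ^ 2 + 2 * frob Y * frob ΔY) * frob W := by
    have t1 : frob ((2:ℝ) • (ΔY * Xᵀ)) ≤ 2 * (frob ΔY * frob X) := by
      rw [frob_smul]
      have h5 := frob_mul_le ΔY Xᵀ
      rw [frob_transpose] at h5
      have : |(2:ℝ)| = 2 := by norm_num
      rw [this]
      linarith
    have t2 : frob E ≤ frob ΔY ^ 2 + 2 * frob Y * frob ΔY := by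
      calc frob E ≤ frob (ΔY * ΔYᵀ + Y * ΔYᵀ) + frob (ΔY * Yᵀ) := frob_add_le _ _
        _ ≤ frob (ΔY * ΔYᵀ) + frob (Y * ΔYᵀ) + frob (ΔY * Yᵀ) := by
            have := frob_add_le (ΔY * ΔYᵀ) (Y * ΔYᵀ); linarith
        _ ≤ frob ΔY * frob ΔYᵀ + frob Y * frob ΔYᵀ + frob ΔY * frob Yᵀ := by
            have := frob_mul_le ΔY ΔYᵀ
            have := frob_mul_le Y ΔYᵀ
            have := frob_mul_le ΔY Yᵀ
            linarith
        _ = frob ΔY ^ 2 + 2 * frob Y * frob ΔY := by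
            rw [frob_transpose, frob_transpose]; ring
    have t3 : frob (E * W) ≤ frob E * frob W := frob_mul_le E W
    have t4 : frob K ≤ frob ((2:ℝ) • (ΔY * Xᵀ)) + frob (E * W) := frob_sub_le _ _
    have hWn := frob_nonneg W
    nlinarith [frob_nonneg E]
  have c1 : 0 ≤ 2 * frob ΔY * frob X := by
    have := mul_nonneg (frob_nonneg ΔY) (frob_nonneg X); linarith
  have c2 : 0 ≤ (frob ΔY ^ 2 + 2 * frob Y * frob ΔY) * frob W := by
    apply mul_nonneg _ (frob_nonneg W)
    nlinarith [sq_nonneg (frob ΔY), mul_nonneg (frob_nonneg Y) (frob_nonneg ΔY)]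
  rcases eq_or_lt_of_le (frob_nonneg D) with h0 | h0
  · rw [← h0]
    exact mul_nonneg (by positivity) (by linarith)
  · have h5 : lam * frob D ≤ frob K := by
      have h6 : (lam * frob D) * frob D ≤ frob K * frob D := by
        calc (lam * frob D) * frob D = lam * frob D ^ 2 := by ring
          _ ≤ frob D * frob K := hkey
          _ = frob K * frob D := by ring
      exact le_of_mul_le_mul_right h6 h0
    calc frob D = (1/lam) * (lam * frob D) := by field_simp
      _ ≤ (1/lam) * (2 * frob ΔY * frob X + (frob ΔY ^ 2 + 2 * frob Y * frob ΔY) * frob W) := by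
          apply mul_le_mul_of_nonneg_left _ (by positivity)
          linarith
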